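/- Fix a unit vector ψ in a Hilbert space H. For each abelian von Neumann subalgebra V, define T^ψ_V := {α ∈ P(V) | ⟨ψ, α ψ⟩ = 1}. Then the family (T^ψ_V)_V is a sub-presheaf of the outer presheaf: if V' ⊆ V and α ∈ T^ψ_V, then δ_{V'}(α) ∈ T^ψ_{V'}. -/
import Mathlib


open scoped InnerProductSpace

/-- An operator is a projection if it is a self-adjoint idempotent. -/
def IsProjOp {H : Type*} [NormedAddCommGroup H] [InnerProductSpace ℂ H]
    [CompleteSpace H] (p : H →L[ℂ] H) : Prop :=
  p * p = p ∧ star p = p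

/-- The order `p ≤ q` on projections: `p * q = p = q * p`. -/
def ProjLE {H : Type*} [NormedAddCommGroup H] [InnerProductSpace ℂ H]
    (p q : H →L[ℂ] H) : Prop :=
  p * q = p ∧ q * p = p

/-- The family `T^ψ_V = {α ∈ P(V) | ⟨ψ, αψ⟩ = 1}` is a sub-presheaf of the outer
presheaf: if `V' ⊆ V` and `α ∈ T^ψ_V`, then `δ_{V'}(α) ∈ T^ψ_{V'}`. -/
theorem stmt_16 {H : Type*} [NormedAddCommGroup H] [InnerProductSpace ℂ H]
    [CompleteSpace H] (ψ : H) (hψ : ‖ψ‖ = 1)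
    (V V' : StarSubalgebra ℂ (H →L[ℂ] H)) (hVV' : V' ≤ V)
    (hVcomm : ∀ a ∈ V, ∀ b ∈ V, a * b = b * a)
    (α : H →L[ℂ] H) (hαV : α ∈ V) (hαproj : IsProjOp α)
    (hα : ⟪ψ, α ψ⟫_ℂ = 1)
    (δ : H →L[ℂ] H) (hδV' : δ ∈ V') (hδproj : IsProjOp δ)
    (hαδ : ProjLE α δ)
    (hleast : ∀ q ∈ V', IsProjOp q → ProjLE α q → ProjLE δ q) :
    δ ∈ V' ∧ IsProjOp δ ∧ ⟪ψ, δ ψ⟫_ℂ = 1 := by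
  refine ⟨hδV', hδproj, ?_⟩
  obtain ⟨hidem, hsa⟩ := hαproj
  -- ⟪αψ, αψ⟫ = ⟪ψ, αψ⟫ = 1
  have hadj : ∀ x y : H, ⟪α x, y⟫_ℂ = ⟪x, α y⟫_ℂ := by
    intro x y
    rw [← ContinuousLinearMap.adjoint_inner_left, ← ContinuousLinearMap.star_eq_adjoint, hsa]
  have h2 : ⟪α ψ, α ψ⟫_ℂ = 1 := by
    rw [hadj]
    have : α (α ψ) = α ψ := by
      conv_rhs => rw [← hidem]
      rfl
    rw [this, hα]
  have h3 : ⟪α ψ, ψ⟫_ℂ = 1 := by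
    rw [← inner_conj_symm, hα]; simp
  have hzero : ⟪ψ - α ψ, ψ - α ψ⟫_ℂ = 0 := by
    rw [inner_sub_sub_self, hα, h3, h2, inner_self_eq_norm_sq_to_K, hψ]
    norm_num
  have hfix : α ψ = ψ := by
    have := inner_self_eq_zero.mp hzero
    have := sub_eq_zero.mp this
    exact this.symm
  have hδψ : δ ψ = ψ := by
    calc δ ψ = δ (α ψ) := by rw [hfix]
    _ = (δ * α) ψ := rfl
    _ = α ψ := by rw [hαδ.2]
    _ = ψ := hfix
  rw [hδψ, inner_self_eq_norm_sq_to_K, hψ]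
  norm_num
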